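/- Let m, n be positive integers with gcd(m, n) = 1. Then, as real polynomials, U_{m−1} and U_{n−1} are coprime (they have no common root, equivalently their gcd in ℝ[t] is a unit), the product U_{m−1}·U_{n−1} divides U_{mn−1} in ℝ[t], and the quotient U_{mn−1}/(U_{m−1}·U_{n−1}) has degree (m−1)(n−1). -/

import Mathlib

open Polynomial Polynomial.Chebyshev


lemma mul_U' (R : Type*) [CommRing R] (k m : ℤ) :
    2 * T R m * U R k = U R (k + m) + U R (k - m) := by
  induction m using Polynomial.Chebyshev.induct with
  | zero => simp [two_mul]
  | one => rw [T_one, U_add_one R k]; ring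
  | add_two m ih1 ih2 =>
    have h₁ := U_add_two R (k + m)
    have h₂ := U_sub_two R (k - m)
    have h₃ := T_add_two R m
    linear_combination (norm := ring_nf) 2 * U R k * h₃ + 2 * (X : R[X]) * ih1 - ih2 - h₁ - h₂
  | neg_add_one m ih1 ih2 =>
    have h₁ := U_sub_one R (k - m)
    have h₂ := U_add_one R (k + m)
    have h₃ := T_sub_one R (-m)
    linear_combination (norm := ring_nf) 2 * U R k * h₃ + 2 * (X : R[X]) * ih1 - ih2 - h₁ - h₂

lemma U_mul_sub_one (R : Type*) [CommRing R] (m n : ℤ) :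
    U R (m * n - 1) = U R (m - 1) * (U R (n - 1)).comp (T R m) := by
  induction n using Polynomial.Chebyshev.induct with
  | zero => simp
  | one => simp
  | add_two n ih1 ih2 =>
    have h₁ := mul_U' R (m * (n + 1) - 1) m
    have h₂ := congr_arg (comp · (T R m)) <| U_add_two R (n - 1)
    simp only [sub_comp, mul_comp, ofNat_comp, X_comp] at h₂
    push_cast at h₂
    linear_combination (norm := ring_nf) -(U R (m - 1) * h₂) - ih2 + 2 * T R m * ih1 - h₁
  | neg_add_one n ih1 ih2 =>
    have h₁ := mul_U' R (m * (-n) - 1) m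
    have h₂ := congr_arg (comp · (T R m)) <| U_add_two R (-n - 2)
    simp only [sub_comp, mul_comp, ofNat_comp, X_comp] at h₂
    push_cast at h₂
    linear_combination (norm := ring_nf) -(U R (m - 1) * h₂) - ih2 + 2 * T R m * ih1 - h₁


lemma U_coeff_natDegree : ∀ n : ℕ, (U ℝ n).coeff n = 2 ^ n ∧ (U ℝ n).natDegree = n := by
  intro n
  induction n using Nat.twoStepInduction with
  | zero => simp
  | one => constructor <;> simp [U_one, coeff_X, natDegree_X] <;> norm_num
  | more n ih1 ih2 =>
    have h : U ℝ ((n : ℤ) + 2) = 2 * X * U ℝ ((n : ℤ) + 1) - U ℝ n := U_add_two ℝ n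
    have hc1 : ((n : ℕ) + 1 : ℤ) = ((n : ℤ) + 1) := by push_cast; ring
    have hc2 : ((n : ℕ) + 2 : ℤ) = ((n : ℤ) + 2) := by push_cast; ring
    obtain ⟨hcn, hdn⟩ := ih1
    obtain ⟨hcn1, hdn1⟩ := ih2
    push_cast at hcn1 hdn1
    have hU1ne : U ℝ ((n : ℤ) + 1) ≠ 0 := fun h0 => by
      simp [h0] at hcn1; exact absurd hcn1 (by positivity)
    have hz : (U ℝ (n : ℤ)).coeff (n + 2) = 0 :=
      coeff_eq_zero_of_natDegree_lt (by rw [hdn]; omega)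
    have hcoeff : (U ℝ ((n : ℤ) + 2)).coeff (n + 2) = 2 ^ (n + 2) := by
      rw [h, coeff_sub, hz, mul_assoc, coeff_ofNat_mul,
        show (n + 2 = (n + 1) + 1) by ring, coeff_X_mul, hcn1]
      ring
    have hle : (U ℝ ((n : ℤ) + 2)).natDegree ≤ n + 2 := by
      rw [h]
      refine le_trans (natDegree_sub_le _ _) ?_
      simp only [max_le_iff]
      constructor
      · refine le_trans (natDegree_mul_le) ?_
        have : (2 * X : ℝ[X]).natDegree ≤ 1 :=
          le_trans natDegree_mul_le (by simp)
        omega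
      · omega
    constructor
    · rw [show (((n:ℕ) + 2 : ℕ) : ℤ) = ((n : ℤ) + 2) by push_cast; ring]; exact hcoeff
    · rw [show (((n:ℕ) + 2 : ℕ) : ℤ) = ((n : ℤ) + 2) by push_cast; ring]
      exact le_antisymm hle (le_natDegree_of_ne_zero (by rw [hcoeff]; positivity))

lemma U_ne_zero (n : ℕ) : U ℝ n ≠ 0 := fun h => by
  have := (U_coeff_natDegree n).1
  rw [h] at this; simp at this
  exact absurd this (by positivity)

lemma U_eval_one (n : ℕ) : (U ℂ n).eval 1 = n + 1 := by
  induction n using Nat.twoStepInduction with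
  | zero => simp
  | one => simp [U_one]; norm_num
  | more n ih1 ih2 =>
    have h : U ℂ ((n : ℤ) + 2) = 2 * X * U ℂ ((n : ℤ) + 1) - U ℂ n := U_add_two ℂ n
    have hc1 : ((n : ℕ) + 1 : ℤ) = ((n : ℤ) + 1) := by push_cast; ring
    have hc2 : ((n : ℕ) + 2 : ℤ) = ((n : ℤ) + 2) := by push_cast; ring
    push_cast at ih1 ih2 ⊢
    rw [h]
    simp only [eval_sub, eval_mul, eval_ofNat, eval_X, ih1, ih2]
    push_cast; ring

lemma U_eval_neg_one (n : ℕ) : (U ℂ n).eval (-1) = (-1) ^ n * (n + 1) := by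
  induction n using Nat.twoStepInduction with
  | zero => simp
  | one => simp [U_one]; norm_num
  | more n ih1 ih2 =>
    have h : U ℂ ((n : ℤ) + 2) = 2 * X * U ℂ ((n : ℤ) + 1) - U ℂ n := U_add_two ℂ n
    have hc1 : ((n : ℕ) + 1 : ℤ) = ((n : ℤ) + 1) := by push_cast; ring
    have hc2 : ((n : ℕ) + 2 : ℤ) = ((n : ℤ) + 2) := by push_cast; ring
    push_cast at ih1 ih2 ⊢
    rw [h]
    simp only [eval_sub, eval_mul, eval_ofNat, eval_X, ih1, ih2]
    push_cast; ring

theorem chebyshev_U_coprime_divides (m n : ℕ) (hm : 0 < m) (hn : 0 < n)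
    (hgcd : Nat.gcd m n = 1) :
    IsCoprime (U ℝ ((m : ℤ) - 1)) (U ℝ ((n : ℤ) - 1)) ∧
    (U ℝ ((m : ℤ) - 1) * U ℝ ((n : ℤ) - 1)) ∣ U ℝ ((m : ℤ) * n - 1) ∧
    (U ℝ ((m : ℤ) * n - 1) / (U ℝ ((m : ℤ) - 1) * U ℝ ((n : ℤ) - 1))).natDegree =
      (m - 1) * (n - 1) := by
  have hm1 : (m : ℤ) - 1 = ((m - 1 : ℕ) : ℤ) := by omega
  have hn1 : (n : ℤ) - 1 = ((n - 1 : ℕ) : ℤ) := by omega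
  have hmn : (m : ℤ) * n - 1 = ((m * n - 1 : ℕ) : ℤ) := by
    have h1 : 1 ≤ m * n := Nat.one_le_iff_ne_zero.mpr (by positivity)
    push_cast [Nat.cast_sub h1]; ring
  -- coprimality
  have hcop : IsCoprime (U ℝ ((m : ℤ) - 1)) (U ℝ ((n : ℤ) - 1)) := by
    refine (Polynomial.isCoprime_iff_aeval_ne_zero_of_isAlgClosed (k := ℝ) ℂ _ _).mpr fun a => ?_
    by_contra hc
    push_neg at hc
    obtain ⟨h1, h2⟩ := hc
    rw [aeval_U] at h1 h2
    obtain ⟨θ, hθ⟩ := Complex.cos_surjective a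
    have e1 := U_complex_cos θ ((m : ℤ) - 1)
    have e2 := U_complex_cos θ ((n : ℤ) - 1)
    rw [hθ, h1, zero_mul] at e1
    rw [hθ, h2, zero_mul] at e2
    rw [show ((((m : ℤ) - 1 : ℤ) : ℂ) + 1) = (m : ℂ) by push_cast; ring] at e1
    rw [show ((((n : ℤ) - 1 : ℤ) : ℂ) + 1) = (n : ℂ) by push_cast; ring] at e2
    obtain ⟨k, hk⟩ := Complex.sin_eq_zero_iff.mp e1.symm
    obtain ⟨l, hl⟩ := Complex.sin_eq_zero_iff.mp e2.symm
    have hpi : ((Real.pi : ℂ)) ≠ 0 := by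
      exact_mod_cast Complex.ofReal_ne_zero.mpr Real.pi_ne_zero
    have hkl : (k : ℤ) * n = l * m := by
      have : ((k * n : ℤ) : ℂ) * Real.pi = ((l * m : ℤ) : ℂ) * Real.pi := by
        push_cast
        calc (k : ℂ) * n * Real.pi = (n : ℂ) * ((m : ℂ) * θ) := by rw [hk]; ring
          _ = (m : ℂ) * ((n : ℂ) * θ) := by ring
          _ = (l : ℂ) * m * Real.pi := by rw [hl]; ring
      have := mul_right_cancel₀ hpi this
      exact_mod_cast this
    have hmk : (m : ℤ) ∣ k := by
      have hco : Int.gcd (m : ℤ) (n : ℤ) = 1 := by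
        rwa [Int.gcd_natCast_natCast]
      exact Int.dvd_of_dvd_mul_right_of_gcd_one (show (m:ℤ) ∣ n * k from ⟨l, by linarith [hkl]⟩) hco
    obtain ⟨j, rfl⟩ := hmk
    have hmne : (m : ℂ) ≠ 0 := Nat.cast_ne_zero.mpr hm.ne'
    have hθj : θ = (j : ℂ) * Real.pi := by
      apply mul_left_cancel₀ hmne
      push_cast at hk ⊢
      linear_combination hk
    have hsin : Complex.sin θ = 0 := Complex.sin_eq_zero_iff.mpr ⟨j, hθj⟩
    have hsq : a * a = 1 := by
      have := Complex.sin_sq_add_cos_sq θ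
      rw [hsin, hθ] at this
      simpa [sq] using this
    have hma : ((m - 1 : ℕ) : ℕ) + 1 = m := by omega
    rcases mul_self_eq_one_iff.mp hsq with rfl | rfl
    · rw [hm1] at h1
      rw [_root_.U_eval_one] at h1
      have : (m : ℂ) = 0 := by rw [← h1]; push_cast [hma]; norm_cast; omega
      exact hmne this
    · rw [hm1] at h1
      rw [_root_.U_eval_neg_one] at h1
      have h0 : ((m - 1 : ℕ) : ℂ) + 1 = 0 := by
        rcases mul_eq_zero.mp h1 with h | h
        · exact absurd h (pow_ne_zero _ (by norm_num))
        · exact h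
      have : (m : ℂ) = 0 := by rw [← h0]; push_cast; norm_cast; omega
      exact hmne this
  -- divisibility
  have hd1 : U ℝ ((m : ℤ) - 1) ∣ U ℝ ((m : ℤ) * n - 1) :=
    ⟨(U ℝ ((n : ℤ) - 1)).comp (T ℝ m), U_mul_sub_one ℝ m n⟩
  have hd2 : U ℝ ((n : ℤ) - 1) ∣ U ℝ ((m : ℤ) * n - 1) := by
    rw [show (m : ℤ) * n = (n : ℤ) * m by ring]
    exact ⟨(U ℝ ((m : ℤ) - 1)).comp (T ℝ n), U_mul_sub_one ℝ n m⟩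
  have hdvd := hcop.mul_dvd hd1 hd2
  refine ⟨hcop, hdvd, ?_⟩
  -- degree computation
  obtain ⟨c, hc⟩ := hdvd
  have hUm : U ℝ ((m : ℤ) - 1) ≠ 0 := by rw [hm1]; exact U_ne_zero _
  have hUn : U ℝ ((n : ℤ) - 1) ≠ 0 := by rw [hn1]; exact U_ne_zero _
  have hq : U ℝ ((m : ℤ) - 1) * U ℝ ((n : ℤ) - 1) ≠ 0 := mul_ne_zero hUm hUn
  have hp : U ℝ ((m : ℤ) * n - 1) ≠ 0 := by rw [hmn]; exact U_ne_zero _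
  have hcne : c ≠ 0 := by rintro rfl; rw [mul_zero] at hc; exact hp hc
  have hquot : U ℝ ((m : ℤ) * n - 1) / (U ℝ ((m : ℤ) - 1) * U ℝ ((n : ℤ) - 1)) = c := by
    rw [hc]
    exact mul_div_cancel_left₀ c hq
  rw [hquot]
  have hdm : (U ℝ ((m : ℤ) - 1)).natDegree = m - 1 := by
    rw [hm1]; exact (U_coeff_natDegree _).2
  have hdn' : (U ℝ ((n : ℤ) - 1)).natDegree = n - 1 := by
    rw [hn1]; exact (U_coeff_natDegree _).2
  have hdp : (U ℝ ((m : ℤ) * n - 1)).natDegree = m * n - 1 := by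
    rw [hmn]; exact (U_coeff_natDegree _).2
  have hsum : m * n - 1 = (m - 1) + (n - 1) + c.natDegree := by
    rw [← hdp, hc, natDegree_mul hq hcne, natDegree_mul hUm hUn, hdm, hdn']
  obtain ⟨a, rfl⟩ : ∃ a, m = a + 1 := ⟨m - 1, by omega⟩
  obtain ⟨b, rfl⟩ : ∃ b, n = b + 1 := ⟨n - 1, by omega⟩
  have hab : (a + 1) * (b + 1) = a * b + a + b + 1 := by ring
  simp only [Nat.add_sub_cancel] at hsum ⊢
  omega
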